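/- Let G be a simple connected graph such that E(i)·E(j) = 1 for every edge (i,j), where E(i) is the vertex energy. Then the adjacency matrix of G has rank 2 and consequently G is a complete bipartite graph. -/

import Mathlib

open Finset Matrix

noncomputable section

variable {V : Type*} [Fintype V] [DecidableEq V]

/-- The adjacency matrix of a simple graph is Hermitian (over ℝ). -/
theorem SimpleGraph.isHermitian_adjMatrix' (G : SimpleGraph V) [DecidableRel G.Adj] :
    (G.adjMatrix ℝ).IsHermitian := by
  rw [Matrix.IsHermitian, Matrix.conjTranspose_eq_transpose_of_trivial]
  exact G.isSymm_adjMatrix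

/-- The energy of a graph: the sum of the absolute values of the
eigenvalues of its adjacency matrix. -/
def SimpleGraph.energy (G : SimpleGraph V) [DecidableRel G.Adj] : ℝ :=
  ∑ k, |G.isHermitian_adjMatrix'.eigenvalues k|

/-- The Randić index of a graph: the sum over the (unordered) edges `(i,j)`
of `1/√(deg i · deg j)`. -/
def SimpleGraph.randic (G : SimpleGraph V) [DecidableRel G.Adj] : ℝ :=
  ∑ e ∈ G.edgeFinset,
    Sym2.lift ⟨fun i j => 1 / Real.sqrt (G.degree i * G.degree j),
      fun i j => by simp [mul_comm]⟩ e

theorem psd_sub_add' {V : Type*} [Fintype V] [DecidableEq V] (A : Matrix V V ℝ) (hA : A.IsHermitian)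
    (B : Matrix V V ℝ) (hB : B.PosSemidef) (hB2 : B * B = A * A) :
    (B - A).PosSemidef ∧ (B + A).PosSemidef := by
  obtain ⟨ev, U, hUU', hspec⟩ : ∃ (ev : V → ℝ) (U : Matrix V V ℝ),
      star U * U = 1 ∧ A = U * Matrix.diagonal ev * star U :=
    ⟨hA.eigenvalues, (hA.eigenvectorUnitary : Matrix V V ℝ),
      Matrix.mem_unitaryGroup_iff'.mp hA.eigenvectorUnitary.2, by simpa using hA.spectral_theorem⟩
  have prod : ∀ f g : V → ℝ, (U * Matrix.diagonal f * star U) * (U * Matrix.diagonal g * star U)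
      = U * Matrix.diagonal (fun k => f k * g k) * star U := by
    intro f g
    simp only [Matrix.mul_assoc]
    rw [← Matrix.mul_assoc (star U) U, hUU', Matrix.one_mul,
      ← Matrix.mul_assoc (Matrix.diagonal f) (Matrix.diagonal g), Matrix.diagonal_mul_diagonal]
  set B' : Matrix V V ℝ := U * Matrix.diagonal (fun k => |ev k|) * star U with hB'
  have hB'psd : B'.PosSemidef :=
    (Matrix.posSemidef_diagonal_iff.mpr fun k => abs_nonneg _).mul_mul_conjTranspose_same U
  have hB'sq : B' * B' = A * A := by
    rw [hB']
    conv_rhs => rw [hspec]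
    rw [prod, prod]
    simp [abs_mul_abs_self]
  have hBB' : B' = B := by
    open scoped MatrixOrder in
    exact (CFC.sq_eq_sq_iff B' B hB'psd.nonneg hB.nonneg).mp (by rw [pow_two, pow_two, hB'sq, hB2])
  have hsub : ∀ f g : V → ℝ, (U * Matrix.diagonal f * star U) - (U * Matrix.diagonal g * star U)
      = U * Matrix.diagonal (f - g) * star U := by
    intro f g
    rw [← Matrix.sub_mul, ← Matrix.mul_sub, Matrix.diagonal_sub]
    rfl
  have haddm : ∀ f g : V → ℝ, (U * Matrix.diagonal f * star U) + (U * Matrix.diagonal g * star U)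
      = U * Matrix.diagonal (f + g) * star U := by
    intro f g
    rw [← Matrix.add_mul, ← Matrix.mul_add, Matrix.diagonal_add]
    rfl
  constructor
  · have h1 : B - A = U * Matrix.diagonal ((fun k => |ev k|) - ev) * star U := by
      rw [← hBB', hB']
      conv_lhs => rw [hspec]
      exact hsub _ _
    rw [h1]
    refine (Matrix.posSemidef_diagonal_iff.mpr fun k => ?_).mul_mul_conjTranspose_same U
    simp only [Pi.sub_apply]
    have := le_abs_self (ev k); linarith
  · have h1 : B + A = U * Matrix.diagonal ((fun k => |ev k|) + ev) * star U := by
      rw [← hBB', hB']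
      conv_lhs => rw [hspec]
      exact haddm _ _
    rw [h1]
    refine (Matrix.posSemidef_diagonal_iff.mpr fun k => ?_).mul_mul_conjTranspose_same U
    simp only [Pi.add_apply]
    have := neg_abs_le (ev k); linarith

theorem edge_rel' {V : Type*} [Fintype V] [DecidableEq V] (A B : Matrix V V ℝ)
    (hsub : (B - A).PosSemidef) (hadd : (B + A).PosSemidef)
    (i j : V) (hAii : A i i = 0) (hAjj : A j j = 0) (hAij : A i j = 1) (hAji : A j i = 1)
    (hBij : B i j = B j i) (hBnn : 0 ≤ B j j) (h1 : B i i * B j j = 1) :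
    (∀ k, A k j = B j j * B k i) ∧ (∀ k, B k j = B j j * A k i) := by
  have quad : ∀ (M : Matrix V V ℝ) (a b : ℝ),
      star (a • (Pi.single i 1 : V → ℝ) + b • (Pi.single j 1 : V → ℝ)) ⬝ᵥ
        (M *ᵥ (a • (Pi.single i 1 : V → ℝ) + b • (Pi.single j 1 : V → ℝ)))
      = a*a*M i i + a*b*M i j + b*a*M j i + b*b*M j j := by
    intro M a b
    simp [Matrix.mulVec_add, Matrix.mulVec_smul, Matrix.mulVec_single, dotProduct_add,
      dotProduct_smul, add_dotProduct, smul_dotProduct,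
      single_dotProduct, smul_eq_mul]
    ring
  have mv : ∀ (M : Matrix V V ℝ) (a b : ℝ) (k : V),
      (M *ᵥ (a • (Pi.single i 1 : V → ℝ) + b • (Pi.single j 1 : V → ℝ))) k = a * M k i + b * M k j := by
    intro M a b k
    simp [Matrix.mulVec_add, Matrix.mulVec_smul, Matrix.mulVec_single, smul_eq_mul]
  set c := B j j with hc
  have hcpos : 0 < c := by
    rcases lt_or_eq_of_le hBnn with h | h
    · exact h
    · exfalso; rw [← h] at h1; simp at h1
  have v1 : star (c • (Pi.single i 1 : V → ℝ) + (1:ℝ) • (Pi.single j 1 : V → ℝ)) ⬝ᵥ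
      ((B - A) *ᵥ (c • (Pi.single i 1 : V → ℝ) + (1:ℝ) • (Pi.single j 1 : V → ℝ))) = 2 * (c * B i j) := by
    rw [quad]
    simp only [Matrix.sub_apply, hAii, hAjj, hAij, hAji, hBij]
    nlinarith [h1]
  have v2 : star ((-c) • (Pi.single i 1 : V → ℝ) + (1:ℝ) • (Pi.single j 1 : V → ℝ)) ⬝ᵥ
      ((B + A) *ᵥ ((-c) • (Pi.single i 1 : V → ℝ) + (1:ℝ) • (Pi.single j 1 : V → ℝ)))
      = -(2 * (c * B i j)) := by
    rw [quad]
    simp only [Matrix.add_apply, hAii, hAjj, hAij, hAji, hBij]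
    nlinarith [h1]
  have hB0 : B i j = 0 := by
    have g1 := hsub.dotProduct_mulVec_nonneg (c • (Pi.single i 1 : V → ℝ) + (1:ℝ) • (Pi.single j 1 : V → ℝ))
    have g2 := hadd.dotProduct_mulVec_nonneg ((-c) • (Pi.single i 1 : V → ℝ) + (1:ℝ) • (Pi.single j 1 : V → ℝ))
    rw [v1] at g1; rw [v2] at g2
    nlinarith
  have z1 : (B - A) *ᵥ (c • (Pi.single i 1 : V → ℝ) + (1:ℝ) • (Pi.single j 1 : V → ℝ)) = 0 :=
    (hsub.dotProduct_mulVec_zero_iff _).mp (by rw [v1, hB0]; ring)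
  have z2 : (B + A) *ᵥ ((-c) • (Pi.single i 1 : V → ℝ) + (1:ℝ) • (Pi.single j 1 : V → ℝ)) = 0 :=
    (hadd.dotProduct_mulVec_zero_iff _).mp (by rw [v2, hB0]; ring)
  constructor <;> intro k <;>
  · have e1 := congrFun z1 k
    have e2 := congrFun z2 k
    rw [mv] at e1 e2
    simp only [Matrix.sub_apply, Matrix.add_apply, Pi.zero_apply] at e1 e2
    linarith

end
/-- Let `G` be a connected graph with at least one edge, and let `E(i) = B i i` be the
vertex energies, where `B` is the positive semidefinite square root of `A²`. If
`E(i)·E(j) = 1` for every edge `(i,j)`, then the adjacency matrix has rank `2` and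
`G` is a complete bipartite graph. -/
theorem stmt18 {V : Type*} [Fintype V] [DecidableEq V]
    (G : SimpleGraph V) [DecidableRel G.Adj]
    (hG : G.Connected) (hedge : ∃ i j, G.Adj i j)
    (B : Matrix V V ℝ) (hB : B.PosSemidef)
    (hB2 : B * B = G.adjMatrix ℝ * G.adjMatrix ℝ)
    (heq : ∀ i j, G.Adj i j → B i i * B j j = 1) :
    (G.adjMatrix ℝ).rank = 2 ∧
      ∃ s : Set V, ∀ u v, G.Adj u v ↔ ((u ∈ s ∧ v ∉ s) ∨ (u ∉ s ∧ v ∈ s)) := by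
  obtain ⟨p, q, hpq⟩ := hedge
  set A := G.adjMatrix ℝ with hAdef
  have hA : A.IsHermitian := G.isHermitian_adjMatrix'
  obtain ⟨hsub, hadd⟩ := psd_sub_add' A hA B hB hB2
  have hBsymm : ∀ k l : V, B k l = B l k := by
    intro k l
    have := congrFun (congrFun hB.1 k) l
    simpa [Matrix.conjTranspose_apply] using this.symm
  have hBnn : ∀ k : V, 0 ≤ B k k := fun k => by
    simpa [dotProduct, Matrix.mulVec, Pi.single_apply] using hB.dotProduct_mulVec_nonneg (Pi.single k 1 : V → ℝ)
  have hA01 : ∀ k l : V, A k l = if G.Adj k l then 1 else 0 := fun k l => by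
    simp [hAdef, SimpleGraph.adjMatrix_apply]
  have key : ∀ i j : V, G.Adj i j →
      (∀ k, A k j = B j j * B k i) ∧ (∀ k, B k j = B j j * A k i) := by
    intro i j hij
    refine edge_rel' A B hsub hadd i j ?_ ?_ ?_ ?_ (hBsymm i j) (hBnn j) (heq i j hij)
    · simp [hA01, G.irrefl]
    · simp [hA01, G.irrefl]
    · simp [hA01, hij]
    · simp [hA01, hij.symm]
  have common : ∀ u v w : V, G.Adj w u → G.Adj w v → ∀ k, A k u = A k v := by
    intro u v w hwu hwv k
    have hu := (key w u hwu).1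
    have hv := (key w v hwv).1
    have hww : 0 < B w w := by
      rcases lt_or_eq_of_le (hBnn w) with h | h
      · exact h
      · exfalso
        have := heq w u hwu
        rw [← h] at this; simp at this
    have huv : B u u = B v v := by
      have h1 := hu w
      have h2 := hv w
      rw [hA01] at h1 h2
      rw [if_pos hwu] at h1
      rw [if_pos hwv] at h2
      exact mul_right_cancel₀ (ne_of_gt hww) (h1.symm.trans h2)
    rw [hu k, hv k, huv]
  have commonAdj : ∀ u v w : V, G.Adj w u → G.Adj w v →
      ∀ k, G.Adj k u ↔ G.Adj k v := by
    intro u v w hwu hwv k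
    have h := common u v w hwu hwv k
    rw [hA01, hA01] at h
    by_cases h1 : G.Adj k u <;> by_cases h2 : G.Adj k v <;>
      simp [h1, h2] at h ⊢
  have hP : ∀ u : V, (∀ k, G.Adj k u ↔ G.Adj k p) ∨ (∀ k, G.Adj k u ↔ G.Adj k q) := by
    intro u
    have hr : Relation.ReflTransGen G.Adj p u :=
      (SimpleGraph.reachable_iff_reflTransGen p u).mp (hG.preconnected p u)
    induction hr with
    | refl => exact Or.inl fun k => Iff.rfl
    | @tail b c hpb hbc ih =>
      rcases ih with h | h
      · have hcb : G.Adj c b := hbc.symm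
        have hcp : G.Adj p c := ((h c).mp hcb).symm
        exact Or.inr (commonAdj c q p hcp hpq)
      · have hcb : G.Adj c b := hbc.symm
        have hcq : G.Adj q c := ((h c).mp hcb).symm
        exact Or.inl (commonAdj c p q hcq hpq.symm)
  set s : Set V := {u | G.Adj q u} with hs
  have γ1 : ∀ u, u ∈ s → ∀ k, G.Adj k u ↔ G.Adj k p := fun u hu =>
    commonAdj u p q hu hpq.symm
  have γ2 : ∀ u, u ∉ s → ∀ k, G.Adj k u ↔ G.Adj k q := by
    intro u hu
    rcases hP u with h | h
    · exact absurd ((h q).mpr hpq.symm) hu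
    · exact h
  have bipart : ∀ u v, G.Adj u v ↔ ((u ∈ s ∧ v ∉ s) ∨ (u ∉ s ∧ v ∈ s)) := by
    intro u v
    constructor
    · intro h
      by_cases hu : u ∈ s
      · refine Or.inl ⟨hu, fun hv => ?_⟩
        exact G.irrefl ((commonAdj u v q hu hv u).mpr h)
      · exact Or.inr ⟨hu, ((γ2 u hu v).mp h.symm).symm⟩
    · rintro (⟨hu, hv⟩ | ⟨hu, hv⟩)
      · exact (γ2 v hv u).mpr (Set.mem_setOf_eq ▸ hu).symm
      · exact ((γ2 u hu v).mpr (Set.mem_setOf_eq ▸ hv).symm).symm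
  refine ⟨?_, s, bipart⟩
  have cols : ∀ u : V, Aᵀ u = Aᵀ p ∨ Aᵀ u = Aᵀ q := by
    intro u
    rcases hP u with h | h
    · refine Or.inl (funext fun k => ?_)
      rw [Matrix.transpose_apply, Matrix.transpose_apply, hA01, hA01]
      exact if_congr (h k) rfl rfl
    · refine Or.inr (funext fun k => ?_)
      rw [Matrix.transpose_apply, Matrix.transpose_apply, hA01, hA01]
      exact if_congr (h k) rfl rfl
  have hrange : Set.range Aᵀ = {Aᵀ p, Aᵀ q} := by
    apply Set.Subset.antisymm
    · rintro x ⟨u, rfl⟩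
      rcases cols u with h | h <;> simp [h]
    · rintro x hx
      rcases hx with rfl | rfl
      · exact ⟨p, rfl⟩
      · exact ⟨q, rfl⟩
  have li : LinearIndependent ℝ ![Aᵀ p, Aᵀ q] := by
    rw [LinearIndependent.pair_iff]
    intro a b hab
    have h1 := congrFun hab q
    have h2 := congrFun hab p
    simp only [Pi.add_apply, Pi.smul_apply, Matrix.transpose_apply, smul_eq_mul,
      Pi.zero_apply, hA01] at h1 h2
    rw [if_pos hpq.symm, if_neg (G.irrefl)] at h1
    rw [if_neg (G.irrefl), if_pos hpq] at h2
    constructor <;> linarith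
  have hpair : ({Aᵀ p, Aᵀ q} : Set (V → ℝ)) = Set.range ![Aᵀ p, Aᵀ q] := by
    simp [Set.pair_comm]
  rw [Matrix.rank_eq_finrank_span_cols]
  change Module.finrank ℝ (Submodule.span ℝ (Set.range Aᵀ)) = 2
  rw [hrange, hpair, finrank_span_eq_card li,
    Fintype.card_fin]
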